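/- For every ζ ∈ ℂ with |ζ| = 1, the sequence defined by θ_0 := 0 and θ_{k+1} := a_{−1}(ζ) + a_0(ζ)θ_k + a_1(ζ)θ_k² converges to a limit θ(ζ) satisfying |θ(ζ)| ≤ 1 and a_1(ζ)θ(ζ)² + (a_0(ζ)−1)θ(ζ) + a_{−1}(ζ) = 0. Moreover, if a_{−1}(1) + a_1(1) > 0 then θ(1) = 1 if and only if a_{−1}(1) ≥ a_1(1); and if a_{−1}(1) < a_1(1) then θ(1) = a_{−1}(1)/a_1(1). -/

import Mathlib

open Filter Topology

/- Convention: the transition probabilities a_{i,j} (i,j ∈ {−1,0,1}) are encoded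
as `v : Fin 3 → Fin 3 → ℝ`, where the index `0, 1, 2` corresponds to `−1, 0, 1`. -/

/-- `symb v i z = a_i(z) = a_{i,−1} z⁻¹ + a_{i,0} + a_{i,1} z`. -/
noncomputable def symb (v : Fin 3 → Fin 3 → ℝ) (i : Fin 3) (z : ℂ) : ℂ :=
  (v i 0 : ℂ) * z⁻¹ + (v i 1 : ℂ) + (v i 2 : ℂ) * z

/-- `symbOne v i = a_i(1) = a_{i,−1} + a_{i,0} + a_{i,1}` (as a real number). -/
def symbOne (v : Fin 3 → Fin 3 → ℝ) (i : Fin 3) : ℝ := v i 0 + v i 1 + v i 2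

/-- The fixed-point iteration θ_0 = 0, θ_{k+1} = a_{−1}(ζ) + a_0(ζ) θ_k + a_1(ζ) θ_k². -/
noncomputable def quadIter (am1 a0 a1 : ℂ) : ℕ → ℂ
  | 0 => 0
  | k + 1 => am1 + a0 * quadIter am1 a0 a1 k + a1 * (quadIter am1 a0 a1 k) ^ 2

noncomputable def rIter (A0 A1 A2 : ℝ) : ℕ → ℝ
  | 0 => 0
  | k + 1 => A0 + A1 * rIter A0 A1 A2 k + A2 * (rIter A0 A1 A2 k) ^ 2

variable {A0 A1 A2 : ℝ} {a0 a1 a2 : ℂ}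

lemma rIter_nonneg (h0 : 0 ≤ A0) (h1 : 0 ≤ A1) (h2 : 0 ≤ A2) :
    ∀ k, 0 ≤ rIter A0 A1 A2 k
  | 0 => le_refl 0
  | k + 1 => by
    have ih := rIter_nonneg h0 h1 h2 k
    simp only [rIter]
    nlinarith [sq_nonneg (rIter A0 A1 A2 k)]

lemma rIter_le_one (h0 : 0 ≤ A0) (h1 : 0 ≤ A1) (h2 : 0 ≤ A2)
    (hs : A0 + A1 + A2 = 1) : ∀ k, rIter A0 A1 A2 k ≤ 1
  | 0 => zero_le_one
  | k + 1 => by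
    have ih := rIter_le_one h0 h1 h2 hs k
    have hn := rIter_nonneg h0 h1 h2 k
    have hsq : rIter A0 A1 A2 k ^ 2 ≤ 1 := by nlinarith
    have t1 : A1 * rIter A0 A1 A2 k ≤ A1 := by nlinarith
    have t2 : A2 * rIter A0 A1 A2 k ^ 2 ≤ A2 := by nlinarith
    simp only [rIter]
    linarith

lemma rIter_mono (h0 : 0 ≤ A0) (h1 : 0 ≤ A1) (h2 : 0 ≤ A2) :
    ∀ k, rIter A0 A1 A2 k ≤ rIter A0 A1 A2 (k + 1)
  | 0 => by simp only [rIter]; nlinarith [sq_nonneg (rIter A0 A1 A2 0)]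
  | k + 1 => by
    have ih := rIter_mono h0 h1 h2 k
    have hn := rIter_nonneg h0 h1 h2 k
    have hn' : 0 ≤ rIter A0 A1 A2 (k+1) := rIter_nonneg h0 h1 h2 (k+1)
    have hsq : rIter A0 A1 A2 k ^ 2 ≤ rIter A0 A1 A2 (k+1) ^ 2 := by nlinarith
    show rIter A0 A1 A2 (k+1) ≤ A0 + A1 * rIter A0 A1 A2 (k+1) + A2 * (rIter A0 A1 A2 (k+1))^2
    conv_lhs => rw [rIter]
    have t1 : A1 * rIter A0 A1 A2 k ≤ A1 * rIter A0 A1 A2 (k+1) := by nlinarith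
    have t2 : A2 * rIter A0 A1 A2 k ^ 2 ≤ A2 * rIter A0 A1 A2 (k+1) ^ 2 := by nlinarith
    linarith

lemma quadIter_abs_le (h0 : 0 ≤ A0) (h1 : 0 ≤ A1) (h2 : 0 ≤ A2)
    (b0 : ‖a0‖ ≤ A0) (b1 : ‖a1‖ ≤ A1) (b2 : ‖a2‖ ≤ A2) :
    ∀ k, ‖quadIter a0 a1 a2 k‖ ≤ rIter A0 A1 A2 k
  | 0 => by simp [quadIter, rIter]
  | k + 1 => by
    have ih := quadIter_abs_le h0 h1 h2 b0 b1 b2 k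
    have hn := rIter_nonneg h0 h1 h2 k
    have han : 0 ≤ ‖quadIter a0 a1 a2 k‖ := norm_nonneg _
    simp only [quadIter, rIter]
    calc ‖a0 + a1 * quadIter a0 a1 a2 k + a2 * (quadIter a0 a1 a2 k) ^ 2‖
        ≤ ‖a0‖ + ‖a1 * quadIter a0 a1 a2 k‖
            + ‖a2 * (quadIter a0 a1 a2 k) ^ 2‖ := by
          exact le_trans (norm_add_le _ _)
            (by gcongr; exact norm_add_le _ _)
      _ ≤ A0 + A1 * rIter A0 A1 A2 k + A2 * (rIter A0 A1 A2 k) ^ 2 := by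
          rw [norm_mul, norm_mul, norm_pow]
          gcongr

lemma quadIter_diff_le (h0 : 0 ≤ A0) (h1 : 0 ≤ A1) (h2 : 0 ≤ A2)
    (b0 : ‖a0‖ ≤ A0) (b1 : ‖a1‖ ≤ A1) (b2 : ‖a2‖ ≤ A2) :
    ∀ k, ‖quadIter a0 a1 a2 (k + 1) - quadIter a0 a1 a2 k‖
      ≤ rIter A0 A1 A2 (k + 1) - rIter A0 A1 A2 k
  | 0 => by simpa [quadIter, rIter] using b0
  | k + 1 => by
    have ih := quadIter_diff_le h0 h1 h2 b0 b1 b2 k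
    have hk := quadIter_abs_le h0 h1 h2 b0 b1 b2 k
    have hk1 := quadIter_abs_le h0 h1 h2 b0 b1 b2 (k + 1)
    have hn := rIter_nonneg h0 h1 h2 k
    have hn1 := rIter_nonneg h0 h1 h2 (k + 1)
    set s := quadIter a0 a1 a2 k
    set t := quadIter a0 a1 a2 (k + 1)
    have key : quadIter a0 a1 a2 (k + 2) - quadIter a0 a1 a2 (k + 1)
        = (a1 + a2 * (t + s)) * (t - s) := by
      show (a0 + a1 * t + a2 * t ^ 2) - (a0 + a1 * s + a2 * s ^ 2)
        = (a1 + a2 * (t + s)) * (t - s)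
      ring
    rw [key, norm_mul]
    have habs : ‖a1 + a2 * (t + s)‖
        ≤ A1 + A2 * (rIter A0 A1 A2 (k + 1) + rIter A0 A1 A2 k) := by
      calc ‖a1 + a2 * (t + s)‖
          ≤ ‖a1‖ + ‖a2‖ * ‖t + s‖ := by
            simpa [norm_mul] using norm_add_le a1 (a2 * (t + s))
        _ ≤ A1 + A2 * (rIter A0 A1 A2 (k + 1) + rIter A0 A1 A2 k) := by
            gcongr
            exact le_trans (norm_add_le _ _) (by gcongr)
    have hdnn : (0:ℝ) ≤ rIter A0 A1 A2 (k + 1) - rIter A0 A1 A2 k := by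
      linarith [rIter_mono h0 h1 h2 k]
    calc ‖a1 + a2 * (t + s)‖ * ‖t - s‖
        ≤ (A1 + A2 * (rIter A0 A1 A2 (k + 1) + rIter A0 A1 A2 k))
            * (rIter A0 A1 A2 (k + 1) - rIter A0 A1 A2 k) := by
          apply mul_le_mul habs ih (norm_nonneg _)
          positivity
      _ = rIter A0 A1 A2 (k + 2) - rIter A0 A1 A2 (k + 1) := by
          show _ = (A0 + A1 * rIter A0 A1 A2 (k+1) + A2 * rIter A0 A1 A2 (k+1) ^ 2)
            - (A0 + A1 * rIter A0 A1 A2 k + A2 * rIter A0 A1 A2 k ^ 2)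
          ring

lemma quadIter_tele (h0 : 0 ≤ A0) (h1 : 0 ≤ A1) (h2 : 0 ≤ A2)
    (b0 : ‖a0‖ ≤ A0) (b1 : ‖a1‖ ≤ A1) (b2 : ‖a2‖ ≤ A2)
    (n : ℕ) : ∀ m, n ≤ m → ‖quadIter a0 a1 a2 m - quadIter a0 a1 a2 n‖
      ≤ rIter A0 A1 A2 m - rIter A0 A1 A2 n := by
  intro m hm
  induction m, hm using Nat.le_induction with
  | base => simp
  | succ m hm ih =>
    calc ‖quadIter a0 a1 a2 (m+1) - quadIter a0 a1 a2 n‖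
        ≤ ‖quadIter a0 a1 a2 (m+1) - quadIter a0 a1 a2 m‖
          + ‖quadIter a0 a1 a2 m - quadIter a0 a1 a2 n‖ := by
          simpa using norm_sub_le_norm_sub_add_norm_sub (quadIter a0 a1 a2 (m+1))
            (quadIter a0 a1 a2 m) (quadIter a0 a1 a2 n)
      _ ≤ _ := by
          have := quadIter_diff_le h0 h1 h2 b0 b1 b2 m
          linarith

lemma rIter_cast (A0 A1 A2 : ℝ) :
    ∀ k, ((rIter A0 A1 A2 k : ℝ) : ℂ) = quadIter (A0 : ℂ) (A1 : ℂ) (A2 : ℂ) k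
  | 0 => by simp [rIter, quadIter]
  | k + 1 => by
    have ih := rIter_cast A0 A1 A2 k
    simp only [rIter, quadIter, ← ih]
    push_cast
    ring

lemma rIter_le_q (h0 : 0 ≤ A0) (h1 : 0 ≤ A1) (h2 : 0 ≤ A2)
    (hs : A0 + A1 + A2 = 1) (hlt : A0 < A2) :
    ∀ k, rIter A0 A1 A2 k ≤ A0 / A2
  | 0 => by positivity
  | k + 1 => by
    have ih := rIter_le_q h0 h1 h2 hs hlt k
    have hn := rIter_nonneg h0 h1 h2 k
    have h2p : 0 < A2 := lt_of_le_of_lt h0 hlt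
    have hq : 0 ≤ A0 / A2 := by positivity
    have hA1 : A1 = 1 - A0 - A2 := by linarith
    have hfix : A0 + A1 * (A0 / A2) + A2 * (A0 / A2) ^ 2 = A0 / A2 := by
      rw [hA1]; field_simp; ring
    show A0 + A1 * rIter A0 A1 A2 k + A2 * (rIter A0 A1 A2 k) ^ 2 ≤ A0 / A2
    rw [← hfix]
    have hsq : rIter A0 A1 A2 k ^ 2 ≤ (A0 / A2) ^ 2 := by nlinarith
    have t1 : A1 * rIter A0 A1 A2 k ≤ A1 * (A0 / A2) := by nlinarith
    have t2 : A2 * rIter A0 A1 A2 k ^ 2 ≤ A2 * (A0 / A2) ^ 2 := by nlinarith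
    linarith

lemma symb_abs_le (v : Fin 3 → Fin 3 → ℝ) (hnn : ∀ i j, 0 ≤ v i j) (i : Fin 3)
    (ζ : ℂ) (hζ : ‖ζ‖ = 1) : ‖symb v i ζ‖ ≤ symbOne v i := by
  have hinv : ‖ζ⁻¹‖ = 1 := by rw [norm_inv, hζ]; norm_num
  calc ‖symb v i ζ‖
      ≤ ‖(v i 0 : ℂ) * ζ⁻¹‖ + ‖(v i 1 : ℂ)‖
        + ‖(v i 2 : ℂ) * ζ‖ := by
        exact le_trans (norm_add_le _ _)
          (by gcongr; exact norm_add_le _ _)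
    _ = symbOne v i := by
        rw [norm_mul, norm_mul, hinv, hζ, Complex.norm_real, Real.norm_eq_abs, Complex.norm_real, Real.norm_eq_abs,
          Complex.norm_real, Real.norm_eq_abs, abs_of_nonneg (hnn i 0), abs_of_nonneg (hnn i 1),
          abs_of_nonneg (hnn i 2)]
        simp [symbOne]

lemma symb_one (v : Fin 3 → Fin 3 → ℝ) (i : Fin 3) :
    symb v i 1 = ((symbOne v i : ℝ) : ℂ) := by
  simp [symb, symbOne]

/- STATEMENT 14: for every ζ on the unit circle the iteration converges to a
limit θ(ζ) with |θ(ζ)| ≤ 1 solving a_1(ζ)θ² + (a_0(ζ)−1)θ + a_{−1}(ζ) = 0;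
moreover for ζ = 1: if a_{−1}(1)+a_1(1) > 0 then θ(1) = 1 ↔ a_{−1}(1) ≥ a_1(1),
and if a_{−1}(1) < a_1(1) then θ(1) = a_{−1}(1)/a_1(1). -/

theorem stmt14 (v : Fin 3 → Fin 3 → ℝ) (hnn : ∀ i j, 0 ≤ v i j)
    (hsum : ∑ i, ∑ j, v i j = 1)
    (ζ : ℂ) (hζ : ‖ζ‖ = 1) :
    ∃ θ : ℂ,
      Tendsto (quadIter (symb v 0 ζ) (symb v 1 ζ) (symb v 2 ζ)) atTop (𝓝 θ) ∧
      ‖θ‖ ≤ 1 ∧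
      symb v 2 ζ * θ ^ 2 + (symb v 1 ζ - 1) * θ + symb v 0 ζ = 0 ∧
      (ζ = 1 →
        (symbOne v 0 + symbOne v 2 > 0 → (θ = 1 ↔ symbOne v 0 ≥ symbOne v 2)) ∧
        (symbOne v 0 < symbOne v 2 → θ = ((symbOne v 0 / symbOne v 2 : ℝ) : ℂ))) := by
  have h0 : 0 ≤ symbOne v 0 := by
    have := hnn 0 0; have := hnn 0 1; have := hnn 0 2; unfold symbOne; linarith
  have h1 : 0 ≤ symbOne v 1 := by
    have := hnn 1 0; have := hnn 1 1; have := hnn 1 2; unfold symbOne; linarith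
  have h2 : 0 ≤ symbOne v 2 := by
    have := hnn 2 0; have := hnn 2 1; have := hnn 2 2; unfold symbOne; linarith
  set A0 := symbOne v 0
  set A1 := symbOne v 1
  set A2 := symbOne v 2
  have hs : A0 + A1 + A2 = 1 := by
    simp only [Fin.sum_univ_three] at hsum
    simp only [A0, A1, A2, symbOne]
    linarith
  have b0 := symb_abs_le v hnn 0 ζ hζ
  have b1 := symb_abs_le v hnn 1 ζ hζ
  have b2 := symb_abs_le v hnn 2 ζ hζ
  set a0 := symb v 0 ζ
  set a1 := symb v 1 ζ
  set a2 := symb v 2 ζ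
  set r := rIter A0 A1 A2 with hr
  set Θ := quadIter a0 a1 a2 with hΘ
  have hrmono : Monotone r := monotone_nat_of_le_succ (rIter_mono h0 h1 h2)
  have hrbdd : BddAbove (Set.range r) :=
    ⟨1, by rintro x ⟨k, rfl⟩; exact rIter_le_one h0 h1 h2 hs k⟩
  set L := ⨆ k, r k with hL
  have hrL : Tendsto r atTop (𝓝 L) := tendsto_atTop_ciSup hrmono hrbdd
  have hrCauchy : CauchySeq r := hrL.cauchySeq
  have hΘCauchy : CauchySeq Θ := by
    rw [Metric.cauchySeq_iff']
    intro ε hε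
    obtain ⟨N, hN⟩ := Metric.cauchySeq_iff'.mp hrCauchy ε hε
    refine ⟨N, fun n hn => ?_⟩
    have ht := quadIter_tele h0 h1 h2 b0 b1 b2 N n hn
    have hd := hN n hn
    rw [Real.dist_eq] at hd
    rw [Complex.dist_eq]
    calc ‖Θ n - Θ N‖ ≤ r n - r N := ht
      _ ≤ |r n - r N| := le_abs_self _
      _ < ε := hd
  obtain ⟨θL, hθ⟩ := cauchySeq_tendsto_of_complete hΘCauchy
  have hshift : Tendsto (fun k => Θ (k + 1)) atTop (𝓝 θL) :=
    hθ.comp (tendsto_add_atTop_nat 1)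
  have hpoly : Tendsto (fun k => a0 + a1 * Θ k + a2 * (Θ k) ^ 2) atTop
      (𝓝 (a0 + a1 * θL + a2 * θL ^ 2)) := by
    exact ((tendsto_const_nhds.add (tendsto_const_nhds.mul hθ)).add
      (tendsto_const_nhds.mul (hθ.pow 2)))
  have heq : θL = a0 + a1 * θL + a2 * θL ^ 2 := by
    refine tendsto_nhds_unique hshift ?_
    exact hpoly
  have habs1 : ‖θL‖ ≤ 1 := by
    have : Tendsto (fun k => ‖Θ k‖) atTop (𝓝 (‖θL‖)) :=
      (continuous_norm.tendsto θL).comp hθ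
    refine le_of_tendsto this (Eventually.of_forall fun k => ?_)
    exact le_trans (quadIter_abs_le h0 h1 h2 b0 b1 b2 k) (rIter_le_one h0 h1 h2 hs k)
  refine ⟨θL, hθ, habs1, by linear_combination -heq, ?_⟩
  intro hζ1
  subst hζ1
  -- at ζ = 1 everything is real
  have hcast : ∀ k, Θ k = ((r k : ℝ) : ℂ) := by
    intro k
    rw [hΘ, hr]
    rw [show a0 = ((A0 : ℝ) : ℂ) from symb_one v 0,
      show a1 = ((A1 : ℝ) : ℂ) from symb_one v 1,
      show a2 = ((A2 : ℝ) : ℂ) from symb_one v 2]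
    exact (rIter_cast A0 A1 A2 k).symm
  have hθL : θL = ((L : ℝ) : ℂ) := by
    refine tendsto_nhds_unique hθ ?_
    have : Tendsto (fun k => ((r k : ℝ) : ℂ)) atTop (𝓝 ((L : ℝ) : ℂ)) :=
      (Complex.continuous_ofReal.tendsto L).comp hrL
    exact (tendsto_congr hcast).mpr this
  have hL0 : 0 ≤ L := le_of_tendsto_of_tendsto' tendsto_const_nhds hrL
    (fun k => rIter_nonneg h0 h1 h2 k)
  have hL1 : L ≤ 1 := le_of_tendsto hrL (Eventually.of_forall (rIter_le_one h0 h1 h2 hs))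
  have hLfix : L = A0 + A1 * L + A2 * L ^ 2 := by
    have h1' : Tendsto (fun k => r (k + 1)) atTop (𝓝 L) :=
      hrL.comp (tendsto_add_atTop_nat 1)
    have h2' : Tendsto (fun k => A0 + A1 * r k + A2 * (r k) ^ 2) atTop
        (𝓝 (A0 + A1 * L + A2 * L ^ 2)) :=
      (tendsto_const_nhds.add (tendsto_const_nhds.mul hrL)).add
        (tendsto_const_nhds.mul (hrL.pow 2))
    exact tendsto_nhds_unique h1' h2'
  have hfac : (L - 1) * (A2 * L - A0) = 0 := by
    linear_combination (-L) * hs - hLfix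
  have hlow : A0 < A2 → L = A0 / A2 := by
    intro hlt
    have h2p : 0 < A2 := lt_of_le_of_lt h0 hlt
    have hq : L ≤ A0 / A2 := le_of_tendsto hrL
      (Eventually.of_forall (rIter_le_q h0 h1 h2 hs hlt))
    have hq1 : A0 / A2 < 1 := (div_lt_one h2p).mpr hlt
    have hne : L - 1 ≠ 0 := by intro h; nlinarith
    have : A2 * L - A0 = 0 := by
      rcases mul_eq_zero.mp hfac with h | h
      · exact absurd h hne
      · exact h
    field_simp
    linarith
  constructor
  · intro hpos
    rw [hθL]
    rw [show (1 : ℂ) = ((1 : ℝ) : ℂ) by norm_num, Complex.ofReal_inj]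
    constructor
    · intro hLeq
      by_contra hge
      push_neg at hge
      have := hlow hge
      have h2p : 0 < A2 := lt_of_le_of_lt h0 hge
      have : A0 / A2 < 1 := (div_lt_one h2p).mpr hge
      rw [hLeq] at *
      linarith [hlow hge ▸ this]
    · intro hge
      rcases mul_eq_zero.mp hfac with h | h
      · linarith
      · -- A2 * L = A0 ≥ A2, L ≤ 1
        rcases eq_or_lt_of_le h2 with h2z | h2p
        · exfalso
          rw [← h2z, zero_mul] at h
          rw [← h2z] at hpos
          linarith
        · have hle : A2 * L ≤ A2 := by nlinarith
          have hA0A2 : A0 ≤ A2 := by linarith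
          have hc : A2 * L = A2 * 1 := by linarith
          exact mul_left_cancel₀ (ne_of_gt h2p) hc
  · intro hlt
    rw [hθL, Complex.ofReal_inj]
    exact hlow hlt
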